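/- Let ρ ∈ H be an invertible group-like element (Δρ = ρ⊗ρ), and let θ_ρ be the algebra automorphism of B given by θ_ρ(b) = b◁ρ. For f ∈ C^n_H(B), the functional ρ_* f on B^{⊗(n+1)} defined by (ρ_* f)(b₀ ⊗ ⋯ ⊗ bₙ) = f(ρ ⊗ b₀ ⊗ ⋯ ⊗ bₙ) is a cochain of the θ_ρ-twisted cyclic complex of B, ρ_* sends equivariant cyclic cocycles to twisted cyclic cocycles and induces a map ρ_* : HC^n_H(B) → HC^n_{θ_ρ}(B), and for every finite-dimensional right H-module X and every H-invariant idempotent p ∈ End(X)⊗B the pairings are compatible: ⟨ρ_*[f], [p]⟩_ρ = ⟨[f],[p]⟩(ρ), i.e. (Ψ^{2n}_ρ(ρ_* f))(p ⊗ ⋯ ⊗ p) = (Ψ^{2n} f)(ρ ⊗ p ⊗ ⋯ ⊗ p). -/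

import Mathlib

open scoped TensorProduct

noncomputable section

/-- A Hopf `ℂ`-algebra with invertible antipode, together with a chosen finite
(Sweedler) representation of the comultiplication: `Δ ω = ∑_{p ∈ Δl ω} p.1 ⊗ p.2`. -/
structure HopfData (H : Type) [Ring H] [HopfAlgebra ℂ H] where
  /-- the inverse of the antipode -/
  Sinv : H →ₗ[ℂ] H
  Sinv_antipode : ∀ ω : H, Sinv (HopfAlgebra.antipode (R := ℂ) ω) = ω
  antipode_Sinv : ∀ ω : H, HopfAlgebra.antipode (R := ℂ) (Sinv ω) = ω
  /-- a chosen list representation of the comultiplication -/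
  Δl : H → List (H × H)
  Δl_repr : ∀ ω : H,
    (Coalgebra.comul (R := ℂ) ω : H ⊗[ℂ] H) = ((Δl ω).map fun p => p.1 ⊗ₜ[ℂ] p.2).sum

variable {H : Type} [Ring H] [HopfAlgebra ℂ H]

/-- the counit, as a `ℂ`-valued function -/
def epsi (ω : H) : ℂ := Coalgebra.counit (R := ℂ) ω

/-- Iterated Sweedler decomposition: `sw n ω` represents
`Δⁿ ω = ∑_v v 0 ⊗ ⋯ ⊗ v n`, where `Δⁿ = (ι ⊗ Δ) Δ^{n-1}`. -/
def HopfData.sw (D : HopfData H) : (n : ℕ) → H → List (Fin (n + 1) → H)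
  | 0, ω => [fun _ => ω]
  | n + 1, ω =>
    (D.sw n ω).flatMap fun v =>
      (D.Δl (v (Fin.last n))).map fun p =>
        Fin.snoc (Function.update v (Fin.last n) p.1) p.2

-- ### auxiliary list lemmas
theorem list_sum_map_add {α M : Type*} [AddCommMonoid M] (l : List α) (F G : α → M) :
    (l.map fun a => F a + G a).sum = (l.map F).sum + (l.map G).sum := by
  induction l with
  | nil => simp
  | cons a t ih => simp [ih, add_add_add_comm]

theorem list_sum_map_smul {α M : Type*} [AddCommMonoid M] [Module ℂ M] (l : List α)
    (c : ℂ) (F : α → M) :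
    (l.map fun a => c • F a).sum = c • (l.map F).sum := by
  induction l with
  | nil => simp
  | cons a t ih => simp [ih, smul_add]

theorem list_sum_flatMap_map {α β M : Type*} [AddCommMonoid M] (l : List α)
    (g : α → List β) (f : β → M) :
    ((l.flatMap g).map f).sum = (l.map fun a => ((g a).map f).sum).sum := by
  induction l with
  | nil => simp
  | cons a t ih => simp [List.flatMap_cons, ih]

-- ### bilinear sums over Δl
section Dl
variable (D : HopfData H) {M : Type} [AddCommMonoid M] [Module ℂ M]

theorem Dl_sum_bilin (φ : H →ₗ[ℂ] H →ₗ[ℂ] M) (ω : H) :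
    ((D.Δl ω).map fun p => φ p.1 p.2).sum
      = TensorProduct.lift φ (Coalgebra.comul (R := ℂ) ω) := by
  rw [D.Δl_repr, map_list_sum, List.map_map]
  congr 1

theorem Dl_rho (ρ : H) (hgrp : Coalgebra.comul (R := ℂ) ρ = ρ ⊗ₜ[ℂ] ρ)
    (φ : H → H → M)
    (h1 : ∀ x y z, φ (x + y) z = φ x z + φ y z)
    (h2 : ∀ (c : ℂ) x z, φ (c • x) z = c • φ x z)
    (h3 : ∀ x y z, φ x (y + z) = φ x y + φ x z)
    (h4 : ∀ (c : ℂ) x z, φ x (c • z) = c • φ x z) :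
    ((D.Δl ρ).map fun p => φ p.1 p.2).sum = φ ρ ρ := by
  have := Dl_sum_bilin D (LinearMap.mk₂ ℂ φ h1 h2 h3 h4) ρ
  rw [hgrp] at this
  simpa using this

end Dl

-- ### basic facts about group-like elements
section Rho
variable {ρ ρi : H}

theorem eps_rho_smul (hgrp : Coalgebra.comul (R := ℂ) ρ = ρ ⊗ₜ[ℂ] ρ) : epsi ρ • ρ = ρ := by
  have h := Coalgebra.rTensor_counit_comul (R := ℂ) ρ
  rw [hgrp] at h
  have := congrArg (TensorProduct.lid ℂ H) h
  simpa [epsi] using this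

theorem eps_mul_eps (hρρi : ρ * ρi = 1) : epsi ρ * epsi ρi = 1 := by
  have : epsi (ρ * ρi) = epsi ρ * epsi ρi := by
    simp [epsi]
  rw [← this, hρρi]
  simp [epsi]

theorem comul_rhoi (hgrp : Coalgebra.comul (R := ℂ) ρ = ρ ⊗ₜ[ℂ] ρ)
    (hρρi : ρ * ρi = 1) (hρiρ : ρi * ρ = 1) :
    Coalgebra.comul (R := ℂ) ρi = ρi ⊗ₜ[ℂ] ρi := by
  have h1 : (Coalgebra.comul (R := ℂ) ρ) * (Coalgebra.comul (R := ℂ) ρi) = 1 := by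
    rw [← Bialgebra.comul_mul, hρρi, Bialgebra.comul_one]
  calc Coalgebra.comul (R := ℂ) ρi
      = ((ρi ⊗ₜ[ℂ] ρi) * (ρ ⊗ₜ[ℂ] ρ)) * Coalgebra.comul (R := ℂ) ρi := by
        rw [Algebra.TensorProduct.tmul_mul_tmul, hρiρ, ← Algebra.TensorProduct.one_def, one_mul]
    _ = (ρi ⊗ₜ[ℂ] ρi) * ((Coalgebra.comul (R := ℂ) ρ) * Coalgebra.comul (R := ℂ) ρi) := by
        rw [hgrp, mul_assoc]
    _ = ρi ⊗ₜ[ℂ] ρi := by rw [h1, mul_one]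

theorem antipode_rhoi (hgrp : Coalgebra.comul (R := ℂ) ρ = ρ ⊗ₜ[ℂ] ρ)
    (hρρi : ρ * ρi = 1) (hρiρ : ρi * ρ = 1) :
    HopfAlgebra.antipode (R := ℂ) ρi = epsi ρi • ρ := by
  have h := HopfAlgebra.mul_antipode_lTensor_comul_apply (R := ℂ) ρi
  rw [comul_rhoi hgrp hρρi hρiρ] at h
  simp only [LinearMap.lTensor_tmul, Algebra.TensorProduct.tmul_mul_tmul,
    LinearMap.mul'_apply] at h
  -- h : ρi * antipode ρi = algebraMap ℂ H (counit ρi)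
  have h2 : ρ * (ρi * HopfAlgebra.antipode (R := ℂ) ρi) = ρ * algebraMap ℂ H (epsi ρi) := by
    rw [h]; rfl
  rw [← mul_assoc, hρρi, one_mul] at h2
  rw [h2, ← Algebra.commutes, ← Algebra.smul_def]

theorem Sinv_rho (D : HopfData H) (hgrp : Coalgebra.comul (R := ℂ) ρ = ρ ⊗ₜ[ℂ] ρ)
    (hρρi : ρ * ρi = 1) (hρiρ : ρi * ρ = 1) :
    D.Sinv ρ = epsi ρ • ρi := by
  have h1 : D.Sinv (HopfAlgebra.antipode (R := ℂ) ρi) = ρi := D.Sinv_antipode ρi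
  rw [antipode_rhoi hgrp hρρi hρiρ, map_smul] at h1
  have h2 := congrArg (fun z => epsi ρ • z) h1
  simp only [smul_smul, eps_mul_eps hρρi, one_smul] at h2
  exact h2

end Rho

-- ### multilinear sums over sw
section SW
variable {M : Type} [AddCommMonoid M] [Module ℂ M]

/-- multilinearity of a function of several `H`-variables -/
def MLfun {m : ℕ} (φ : (Fin (m + 1) → H) → M) : Prop :=
  (∀ (v : Fin (m + 1) → H) (i : Fin (m + 1)) (x y : H),
    φ (Function.update v i (x + y))
      = φ (Function.update v i x) + φ (Function.update v i y)) ∧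
  (∀ (v : Fin (m + 1) → H) (i : Fin (m + 1)) (c : ℂ) (x : H),
    φ (Function.update v i (c • x)) = c • φ (Function.update v i x))

/-- the bilinear map `(a, c) ↦ φ (snoc (update w last a) c)` -/
def snocBilin {m : ℕ} (φ : (Fin (m + 2) → H) → M) (hφ : MLfun φ) (w : Fin (m + 1) → H) :
    H →ₗ[ℂ] H →ₗ[ℂ] M :=
  LinearMap.mk₂ ℂ (fun a c => φ (Fin.snoc (Function.update w (Fin.last m) a) c))
    (by
      intro x y c
      simp only [Fin.snoc_update]
      exact hφ.1 _ _ x y)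
    (by
      intro r x c
      simp only [Fin.snoc_update]
      exact hφ.2 _ _ r x)
    (by
      intro a y z
      have h := hφ.1 (Fin.snoc (Function.update w (Fin.last m) a) y) (Fin.last (m + 1)) y z
      simpa only [Fin.update_snoc_last] using h)
    (by
      intro r a z
      have h := hφ.2 (Fin.snoc (Function.update w (Fin.last m) a) z) (Fin.last (m + 1)) r z
      simpa only [Fin.update_snoc_last] using h)

theorem snocBilin_update {m : ℕ} (φ : (Fin (m + 2) → H) → M) (hφ : MLfun φ)
    (v : Fin (m + 1) → H) (z : H) :
    snocBilin φ hφ (Function.update v (Fin.last m) z) = snocBilin φ hφ v := by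
  ext a c
  simp [snocBilin, Function.update_idem]

theorem sw_rho (D : HopfData H) {ρ : H}
    (hgrp : Coalgebra.comul (R := ℂ) ρ = ρ ⊗ₜ[ℂ] ρ) :
    ∀ (n : ℕ) (φ : (Fin (n + 1) → H) → M), MLfun φ →
      ((D.sw n ρ).map φ).sum = φ (fun _ => ρ)
  | 0, φ, _ => by simp [HopfData.sw]
  | (n + 1), φ, hφ => by
    have key : ∀ v : Fin (n + 1) → H,
        ((D.Δl (v (Fin.last n))).map fun p =>
          φ (Fin.snoc (Function.update v (Fin.last n) p.1) p.2)).sum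
        = TensorProduct.lift (snocBilin φ hφ v) (Coalgebra.comul (R := ℂ) (v (Fin.last n))) := by
      intro v
      exact Dl_sum_bilin D (snocBilin φ hφ v) (v (Fin.last n))
    obtain ⟨ψ, hψ⟩ : ∃ ψ : (Fin (n + 1) → H) → M, ψ = fun v =>
        ((D.Δl (v (Fin.last n))).map fun p =>
          φ (Fin.snoc (Function.update v (Fin.last n) p.1) p.2)).sum := ⟨_, rfl⟩
    have hMLψ : MLfun ψ := by
      constructor
      · intro v i x y
        by_cases hi : i = Fin.last n
        · subst hi
          simp only [hψ, key, Function.update_self, snocBilin_update, map_add]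
        · have e : ∀ z : H, ∀ p : H × H,
              (Fin.snoc (Function.update (Function.update v i z) (Fin.last n) p.1) p.2 :
                Fin (n + 2) → H)
              = Function.update
                  (Fin.snoc (Function.update v (Fin.last n) p.1) p.2) i.castSucc z := by
            intro z p
            rw [Function.update_comm hi, Fin.snoc_update]
          simp only [hψ, e, Function.update_of_ne (Ne.symm hi), hφ.1]
          exact list_sum_map_add _ _ _
      · intro v i c x
        by_cases hi : i = Fin.last n
        · subst hi
          simp only [hψ, key, Function.update_self, snocBilin_update, map_smul]
        · have e : ∀ z : H, ∀ p : H × H,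
              (Fin.snoc (Function.update (Function.update v i z) (Fin.last n) p.1) p.2 :
                Fin (n + 2) → H)
              = Function.update
                  (Fin.snoc (Function.update v (Fin.last n) p.1) p.2) i.castSucc z := by
            intro z p
            rw [Function.update_comm hi, Fin.snoc_update]
          simp only [hψ, e, Function.update_of_ne (Ne.symm hi), hφ.2]
          exact list_sum_map_smul _ _ _
    have step : ((D.sw (n + 1) ρ).map φ).sum = ((D.sw n ρ).map ψ).sum := by
      rw [hψ]
      show (((D.sw n ρ).flatMap fun v => (D.Δl (v (Fin.last n))).map fun p =>
          Fin.snoc (Function.update v (Fin.last n) p.1) p.2).map φ).sum = _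
      rw [list_sum_flatMap_map]
      simp only [List.map_map, Function.comp_def]
    rw [step, sw_rho D hgrp n ψ hMLψ, hψ]
    dsimp only
    rw [key, hgrp]
    simp only [TensorProduct.lift.tmul, snocBilin, LinearMap.mk₂_apply]
    congr 1
    funext j
    refine Fin.lastCases ?_ (fun k => ?_) j
    · simp
    · simp [Fin.snoc_castSucc, Function.update_apply]

end SW


/-- A right `H`-module structure (over `ℂ`), recorded as the antihomomorphism
`act : H → End(B)`, so `act ω b` stands for `b ◁ ω`. -/
structure RAct (H : Type) [Ring H] [HopfAlgebra ℂ H] (B : Type) [AddCommGroup B]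
    [Module ℂ B] where
  act : H →ₗ[ℂ] B →ₗ[ℂ] B
  act_one : act 1 = LinearMap.id
  act_mul : ∀ ω η : H, act (ω * η) = (act η) ∘ₗ (act ω)

/-- A unital right `H`-module algebra structure on `B`:
`(b₁ b₂) ◁ ω = ∑ (b₁ ◁ ω₍₀₎)(b₂ ◁ ω₍₁₎)` and `1 ◁ ω = ε(ω) 1`. -/
structure MAlg (D : HopfData H) (B : Type) [Ring B] [Algebra ℂ B] extends RAct H B where
  act_mul_mul : ∀ (ω : H) (b₁ b₂ : B),
    act ω (b₁ * b₂) = ((D.Δl ω).map fun p => act p.1 b₁ * act p.2 b₂).sum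
  act_algOne : ∀ ω : H, act ω (1 : B) = epsi ω • (1 : B)


/-- the action as a plain function: `fn ω b = b ◁ ω` -/
def RAct.fn {H : Type} [Ring H] [HopfAlgebra ℂ H] {B : Type} [AddCommGroup B] [Module ℂ B]
    (A : RAct H B) : H → B → B := fun ω x => A.act ω x

/-- the action of a module algebra as a plain function -/
def MAlg.fn {H : Type} [Ring H] [HopfAlgebra ℂ H] {B : Type} [Ring B] [Algebra ℂ B]
    {D : HopfData H} (A : MAlg D B) : H → B → B := A.toRAct.fn

/-- The space of `ℂ`-valued functions of one `H`-variable and `n+1` `B`-variables;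
(multi)linear such functions correspond to linear functionals on `H ⊗ B^{⊗(n+1)}`. -/
abbrev Raw (H B : Type) (n : ℕ) := H → (Fin (n + 1) → B) → ℂ

section Raw

variable {H : Type} [Ring H] [HopfAlgebra ℂ H] {B : Type} [Ring B] [Algebra ℂ B] {n : ℕ}

/-- `f` is linear in the `H`-variable and in each `B`-variable separately, i.e. `f`
is (the restriction of) a linear functional on `H ⊗ B^{⊗(n+1)}`. -/
def IsML (f : Raw H B n) : Prop :=
  (∀ ω η b, f (ω + η) b = f ω b + f η b) ∧
  (∀ (c : ℂ) ω b, f (c • ω) b = c * f ω b) ∧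
  (∀ ω b (i : Fin (n + 1)) (x y : B),
    f ω (Function.update b i (x + y)) =
      f ω (Function.update b i x) + f ω (Function.update b i y)) ∧
  (∀ ω b (i : Fin (n + 1)) (c : ℂ) (x : B),
    f ω (Function.update b i (c • x)) = c * f ω (Function.update b i x))

/-- `H`-invariance of the functional `f` on `H ⊗ B^{⊗(n+1)}`:
`(ω ▷ f)(η ⊗ b₀ ⊗ ⋯ ⊗ bₙ) = f(S⁻¹(ω₍₀₎) η ω₍₁₎ ⊗ b₀ ◁ ω₍₂₎ ⊗ ⋯ ⊗ bₙ ◁ ω₍ₙ₊₂₎)`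
equals `ε(ω) f(η ⊗ b₀ ⊗ ⋯ ⊗ bₙ)`. -/
def IsInv (D : HopfData H) (act : H → B → B) (f : Raw H B n) : Prop :=
  ∀ (ω η : H) (b : Fin (n + 1) → B),
    ((D.sw (n + 2) ω).map fun v =>
        f (D.Sinv (v 0) * η * v 1) fun i => act (v i.succ.succ) (b i)).sum
      = epsi ω * f η b

/-- membership in the equivariant cochain space `C^n_H(B)` -/
def InC (D : HopfData H) (act : H → B → B) (f : Raw H B n) : Prop :=
  IsML f ∧ IsInv D act f

/-- the cyclic operator
`(tₙ f)(ω ⊗ b₀ ⊗ ⋯ ⊗ bₙ) = f(ω₍₀₎ ⊗ bₙ ◁ ω₍₁₎ ⊗ b₀ ⊗ ⋯ ⊗ b_{n-1})` -/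
def tRaw (D : HopfData H) (act : H → B → B) (f : Raw H B n) : Raw H B n :=
  fun ω b =>
    ((D.Δl ω).map fun p =>
      f p.1 (Fin.cons (act p.2 (b (Fin.last n))) fun i : Fin n => b i.castSucc)).sum

/-- merging the `i`-th and `(i+1)`-st entries of a `(n+2)`-tuple by multiplication -/
def contract (i : Fin (n + 1)) (b : Fin (n + 2) → B) : Fin (n + 1) → B :=
  fun j =>
    if (j : ℕ) < (i : ℕ) then b j.castSucc
    else if (j : ℕ) = (i : ℕ) then b j.castSucc * b j.succ
    else b j.succ

/-- the coface operators `dⁿᵢ : C^{n} → C^{n+1}` (`i < n+1` multiplies adjacent entries;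
the last one is `d_{n+1} = t ∘ d₀`) -/
def dRaw (D : HopfData H) (act : H → B → B) (i : Fin (n + 2)) (f : Raw H B n) :
    Raw H B (n + 1) :=
  if h : (i : ℕ) < n + 1 then fun ω b => f ω (contract ⟨i, h⟩ b)
  else tRaw D act fun ω b => f ω (contract 0 b)

/-- the codegeneracy operators `sⁿᵢ : C^{n+1} → C^n`, inserting a `1` after the `i`-th entry -/
def sRaw (i : Fin (n + 1)) (f : Raw H B (n + 1)) : Raw H B n :=
  fun ω b => f ω (Fin.insertNth i.succ 1 b)

/-- the Hochschild coboundary `b = ∑ (-1)ⁱ dᵢ` -/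
def bRaw (D : HopfData H) (act : H → B → B) (f : Raw H B n) : Raw H B (n + 1) :=
  fun ω b => ∑ i : Fin (n + 2), ((-1 : ℂ) ^ (i : ℕ)) * dRaw D act i f ω b

/-- cyclicity: `λ f = (-1)ⁿ tₙ f = f` -/
def IsCyc (D : HopfData H) (act : H → B → B) (f : Raw H B n) : Prop :=
  ∀ ω b, ((-1 : ℂ) ^ n) * tRaw D act f ω b = f ω b

/-- an `n`-cocycle of the cyclic complex `(Ker(1-λ), b)` computing `HC^n_H(B)` -/
def IsCocycle (D : HopfData H) (act : H → B → B) (f : Raw H B n) : Prop :=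
  InC D act f ∧ IsCyc D act f ∧ ∀ ω b, bRaw D act f ω b = 0

end Raw

section Mat

variable {H : Type} [Ring H] [HopfAlgebra ℂ H]

/-- A finite-dimensional right `H`-module, presented as a matrix antirepresentation
`π : H → Matrix ι ι ℂ` (so `x ◁ ω` is the row vector `x · π(ω)`). -/
structure MRep (H : Type) [Ring H] [HopfAlgebra ℂ H] (ι : Type) [Fintype ι]
    [DecidableEq ι] where
  π : H →ₗ[ℂ] Matrix ι ι ℂ
  π_one : π 1 = 1
  π_mul : ∀ ω η : H, π (ω * η) = π η * π ω

variable {B : Type} [Ring B] [Algebra ℂ B]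
variable {ι κ : Type} [Fintype ι] [DecidableEq ι] [Fintype κ] [DecidableEq κ]

/-- The right `H`-action on `Hom(X, X') ⊗ B` (realized as rectangular matrices over `B`):
`(T ⊗ b) ◀ ω = π'(ω₍₀₎) T π(S⁻¹(ω₍₂₎)) ⊗ b ◁ ω₍₁₎`. -/
def matActR (D : HopfData H) (P : MRep H ι) (P' : MRep H κ) (A : RAct H B) :
    H → Matrix κ ι B → Matrix κ ι B :=
  fun ω M =>
    ((D.sw 2 ω).map fun v =>
      ((P'.π (v 0)).map (algebraMap ℂ B)) *
        (M.map fun x => A.act (v 1) x) *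
          ((P.π (D.Sinv (v 2))).map (algebraMap ℂ B))).sum

/-- the right `H`-action on `End(X) ⊗ B`, realized as `Matrix ι ι B` -/
def matAct (D : HopfData H) (P : MRep H ι) (A : RAct H B) :
    H → Matrix ι ι B → Matrix ι ι B :=
  matActR D P P A

/-- The map `Ψⁿ : C^n_H(B) → C^n_H(End(X) ⊗ B)`,
`(Ψⁿ f)(ω ⊗ (T₀⊗b₀) ⊗ ⋯ ⊗ (Tₙ⊗bₙ)) = f(ω₍₀₎ ⊗ b₀ ⊗ ⋯ ⊗ bₙ) Tr(π(S⁻¹(ω₍₁₎)) T₀ ⋯ Tₙ)`,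
written out on matrices over `B`. -/
def PsiRaw (D : HopfData H) (P : MRep H ι) {n : ℕ} (f : Raw H B n) :
    Raw H (Matrix ι ι B) n :=
  fun ω M =>
    ((D.Δl ω).map fun p =>
      ∑ k : Fin (n + 2) → ι,
        (P.π (D.Sinv p.2)) (k (Fin.last (n + 1))) (k 0) *
          f p.1 fun i => M i (k i.castSucc) (k i.succ)).sum

/-- the right `H`-action on `X ⊗ B` (tensor product action), `X` realized as row
vectors with matrix antirepresentation `P` -/
def ractV (D : HopfData H) (P : MRep H ι) (A : RAct H B) (ω : H) (v : ι → B) : ι → B :=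
  fun j => ((D.Δl ω).map fun p => ∑ i, (P.π p.1) i j • A.act p.2 (v i)).sum

/-- membership in `R(H)`, the `H`-invariant linear functionals on `H` (with the
adjoint action `η ◁ ω = S⁻¹(ω₍₀₎) η ω₍₁₎`) -/
def IsRH (D : HopfData H) (F : H → ℂ) : Prop :=
  (∀ ω η : H, F (ω + η) = F ω + F η) ∧
  (∀ (c : ℂ) (ω : H), F (c • ω) = c * F ω) ∧
  (∀ ω η : H, ((D.Δl ω).map fun p => F (D.Sinv p.1 * η * p.2)).sum = epsi ω * F η)

end Mat

section Twisted

variable {B : Type} [Ring B]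

/-- the cofaces of the `θ`-twisted cyclic complex of `B` (Kustermans–Murphy–Tuset):
for `i < n+1` multiplication of adjacent entries, and for the last index
`(dₙ g)(b₀ ⊗ ⋯ ⊗ bₙ) = g(θ(bₙ) b₀ ⊗ b₁ ⊗ ⋯ ⊗ b_{n-1})`. -/
def twCon (θ : B → B) {n : ℕ} (i : Fin (n + 2)) (b : Fin (n + 2) → B) :
    Fin (n + 1) → B :=
  if h : (i : ℕ) < n + 1 then contract ⟨i, h⟩ b
  else Fin.cons (θ (b (Fin.last (n + 1))) * b 0) fun j : Fin n => b j.succ.castSucc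

end Twisted


section Bridge
variable {H : Type} [Ring H] [HopfAlgebra ℂ H] {B : Type} [Ring B] [Algebra ℂ B]
variable (D : HopfData H) (A : MAlg D B) {ρ ρi : H}

theorem fn_add (x y : H) (c : B) : A.fn (x + y) c = A.fn x c + A.fn y c := by
  simp [MAlg.fn, RAct.fn, map_add]

theorem fn_smul (s : ℂ) (x : H) (c : B) : A.fn (s • x) c = s • A.fn x c := by
  rw [MAlg.fn, RAct.fn, map_smul]
  rfl

theorem contract_zero_eq {n : ℕ} (c : Fin (n + 2) → B) :
    contract 0 c = Fin.cons (c 0 * c 1) (fun k : Fin n => c k.succ.succ) := by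
  funext j
  refine Fin.cases ?_ (fun k => ?_) j
  · simp [contract, Fin.succ_zero_eq_one]
  · simp [contract, Fin.cons_succ]

theorem one_ne_zero_fin {n : ℕ} : (1 : Fin (n + 2)) ≠ 0 := by
  simp [Fin.ext_iff]

theorem contract_zero_update {n : ℕ} (c : Fin (n + 2) → B) (z : B) :
    contract 0 (Function.update c 0 z) = Function.update (contract 0 c) 0 (z * c 1) := by
  rw [contract_zero_eq, contract_zero_eq, Fin.update_cons_zero]
  funext j
  refine Fin.cases ?_ (fun k => ?_) j
  · simp [Function.update_apply, one_ne_zero_fin]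
  · simp [Fin.cons_succ, Function.update_apply, Fin.succ_ne_zero]

theorem tRaw_rho (hgrp : Coalgebra.comul (R := ℂ) ρ = ρ ⊗ₜ[ℂ] ρ) {n : ℕ} (F : Raw H B n)
    (h1 : ∀ ω η c, F (ω + η) c = F ω c + F η c)
    (h2 : ∀ (s : ℂ) ω c, F (s • ω) c = s * F ω c)
    (h3 : ∀ ω (c : Fin (n + 1) → B) x y, F ω (Function.update c 0 (x + y))
      = F ω (Function.update c 0 x) + F ω (Function.update c 0 y))
    (h4 : ∀ ω (c : Fin (n + 1) → B) (s : ℂ) x, F ω (Function.update c 0 (s • x))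
      = s * F ω (Function.update c 0 x))
    (b : Fin (n + 1) → B) :
    tRaw D A.fn F ρ b
      = F ρ (Fin.cons (A.fn ρ (b (Fin.last n))) fun i : Fin n => b i.castSucc) := by
  have e : ∀ z : B, (Fin.cons z (fun i : Fin n => b i.castSucc) : Fin (n + 1) → B)
      = Function.update (Fin.cons (A.fn ρ (b (Fin.last n))) fun i : Fin n => b i.castSucc)
          0 z :=
    fun z => (Fin.update_cons_zero _ _ _).symm
  show ((D.Δl ρ).map fun p =>
      F p.1 (Fin.cons (A.fn p.2 (b (Fin.last n))) fun i : Fin n => b i.castSucc)).sum = _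
  exact Dl_rho D ρ hgrp (M := ℂ)
    (fun x y => F x (Fin.cons (A.fn y (b (Fin.last n))) fun i : Fin n => b i.castSucc))
    (fun x y z => h1 x y _)
    (fun s x z => by simpa [smul_eq_mul] using h2 s x _)
    (by
      intro x y z
      rw [e (A.fn (y + z) (b (Fin.last n))), fn_add, h3, ← e, ← e])
    (by
      intro s x z
      rw [e (A.fn (s • z) (b (Fin.last n))), fn_smul, h4, ← e, smul_eq_mul])

theorem bRaw_rho (hgrp : Coalgebra.comul (R := ℂ) ρ = ρ ⊗ₜ[ℂ] ρ) {n : ℕ}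
    (g : Raw H B n) (hML : IsML g) (b : Fin (n + 2) → B) :
    bRaw D A.fn g ρ b
      = ∑ i : Fin (n + 2), ((-1 : ℂ)) ^ (i : ℕ) * g ρ (twCon (A.fn ρ) i b) := by
  unfold bRaw
  refine Finset.sum_congr rfl fun i _ => ?_
  congr 1
  by_cases h : (i : ℕ) < n + 1
  · rw [dRaw, dif_pos h, twCon, dif_pos h]
  · rw [dRaw, dif_neg h, twCon, dif_neg h]
    rw [tRaw_rho D A hgrp (fun ω c => g ω (contract 0 c))
      (fun ω η c => hML.1 ω η _)
      (fun s ω c => hML.2.1 s ω _)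
      (by
        intro ω c x y
        simp only [contract_zero_update, add_mul]
        exact hML.2.2.1 ω _ 0 _ _)
      (by
        intro ω c s x
        simp only [contract_zero_update, smul_mul_assoc]
        exact hML.2.2.2 ω _ 0 s _)]
    congr 1
    rw [contract_zero_eq]
    have h1 : (1 : Fin (n + 2)) = Fin.succ 0 := (Fin.succ_zero_eq_one).symm
    have h2 : (1 : Fin (n + 3)) = Fin.succ 0 := (Fin.succ_zero_eq_one).symm
    simp only [Fin.cons_zero, h1, h2, Fin.cons_succ, Fin.castSucc_zero]

end Bridge

/-- for an invertible group-like `ρ ∈ H` and the twist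
`θ_ρ(b) = b ◁ ρ`, the map `(ρ_* f)(b₀ ⊗ ⋯ ⊗ bₙ) = f(ρ ⊗ b₀ ⊗ ⋯ ⊗ bₙ)` sends
equivariant cochains to twisted cochains and equivariant cyclic cocycles to
`θ_ρ`-twisted cyclic cocycles, it intertwines the Hochschild coboundaries (hence
induces `ρ_* : HC^n_H(B) → HC^n_{θ_ρ}(B)`), and the pairings are compatible:
`⟨ρ_*[f], [p]⟩_ρ = ⟨[f], [p]⟩(ρ)`, i.e.
`(Ψ^{2n}_ρ(ρ_* f))(p ⊗ ⋯ ⊗ p) = (Ψ^{2n} f)(ρ ⊗ p ⊗ ⋯ ⊗ p)`. -/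
theorem rho_star_to_twisted_cyclic
    {H : Type} [Ring H] [HopfAlgebra ℂ H] (D : HopfData H)
    {B : Type} [Ring B] [Algebra ℂ B] (A : MAlg D B)
    (ρ ρi : H) (hgrp : Coalgebra.comul (R := ℂ) ρ = ρ ⊗ₜ[ℂ] ρ)
    (hρρi : ρ * ρi = 1) (hρiρ : ρi * ρ = 1) :
    -- `ρ_* f` is a twisted cochain: it is `θ_ρ`-invariant
    (∀ (n : ℕ) (f : Raw H B n), InC D A.fn f →
      ∀ b : Fin (n + 1) → B, f ρ (fun i => A.fn ρ (b i)) = f ρ b) ∧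
    -- `ρ_*` sends cyclic cocycles to twisted cyclic cocycles
    (∀ (n : ℕ) (f : Raw H B n), IsCocycle D A.fn f →
      (∀ b : Fin (n + 1) → B,
        ((-1 : ℂ) ^ n) *
            f ρ (Fin.cons (A.fn ρ (b (Fin.last n))) fun i : Fin n => b i.castSucc)
          = f ρ b) ∧
      (∀ b : Fin (n + 2) → B,
        ∑ i : Fin (n + 2), ((-1 : ℂ) ^ (i : ℕ)) * f ρ (twCon (A.fn ρ) i b) = 0)) ∧
    -- `ρ_*` intertwines the coboundaries: `ρ_* (b g) = b_θ (ρ_* g)`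
    (∀ (n : ℕ) (g : Raw H B n), InC D A.fn g →
      ∀ b : Fin (n + 2) → B,
        bRaw D A.fn g ρ b
          = ∑ i : Fin (n + 2), ((-1 : ℂ) ^ (i : ℕ)) * g ρ (twCon (A.fn ρ) i b)) ∧
    -- compatibility of the pairings on `H`-invariant idempotents
    (∀ (n : ℕ) (ι : Type) [Fintype ι] [DecidableEq ι],
      ∀ (P : MRep H ι) (p : Matrix ι ι B), p * p = p →
      (∀ ω : H, matAct D P A.toRAct ω p = epsi ω • p) →
      ∀ f : Raw H B (2 * n), IsCocycle D A.fn f →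
        (∑ k : Fin (2 * n + 2) → ι,
          (P.π ρi) (k (Fin.last (2 * n + 1))) (k 0) *
            f ρ (fun i => p (k i.castSucc) (k i.succ)))
          = PsiRaw D P f ρ (fun _ => p)) := by
  have hne : epsi ρ ≠ 0 := left_ne_zero_of_mul_eq_one (eps_mul_eps hρρi)
  have heps : epsi ρ • ρ = ρ := eps_rho_smul hgrp
  have hSinv : D.Sinv ρ = epsi ρ • ρi := Sinv_rho D hgrp hρρi hρiρ
  have hfnadd : ∀ (x y : H) (c : B), A.fn (x + y) c = A.fn x c + A.fn y c := fn_add D A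
  have hfnsmul : ∀ (s : ℂ) (x : H) (c : B), A.fn (s • x) c = s • A.fn x c := fn_smul D A
  -- Conjunct 1
  have c1 : ∀ (n : ℕ) (f : Raw H B n), InC D A.fn f →
      ∀ b : Fin (n + 1) → B, f ρ (fun i => A.fn ρ (b i)) = f ρ b := by
    intro n f hf b
    obtain ⟨hML, hInv⟩ := hf
    have key := hInv ρ ρ b
    have hphi : MLfun (M := ℂ) (fun v : Fin (n + 3) → H =>
        f (D.Sinv (v 0) * ρ * v 1) fun i => A.fn (v i.succ.succ) (b i)) := by
      have hv0 : ∀ z : H, ∀ w : Fin (n + 3) → H,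
          (fun j : Fin (n + 1) => A.fn ((Function.update w 0 z) j.succ.succ) (b j))
            = fun j => A.fn (w j.succ.succ) (b j) := by
        intro z w; funext j; rw [Function.update_of_ne (Fin.succ_ne_zero _)]
      have hv1 : ∀ z : H, ∀ w : Fin (n + 3) → H,
          (fun j : Fin (n + 1) => A.fn ((Function.update w 1 z) j.succ.succ) (b j))
            = fun j => A.fn (w j.succ.succ) (b j) := by
        intro z w; funext j
        rw [Function.update_of_ne (show (j.succ.succ : Fin (n + 3)) ≠ 1 by
          intro hh
          rw [← Fin.succ_zero_eq_one] at hh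
          exact Fin.succ_ne_zero j (Fin.succ_injective _ hh))]
      have hvj : ∀ (j : Fin (n + 1)) (z : H) (w : Fin (n + 3) → H),
          (fun l : Fin (n + 1) => A.fn ((Function.update w j.succ.succ z) l.succ.succ) (b l))
            = Function.update (fun l => A.fn (w l.succ.succ) (b l)) j (A.fn z (b j)) := by
        intro j z w; funext l
        rcases eq_or_ne l j with rfl | hlj
        · rw [Function.update_self, Function.update_self]
        · rw [Function.update_of_ne
            (fun hh => hlj (Fin.succ_injective _ (Fin.succ_injective _ hh))),
            Function.update_of_ne hlj]
      have h0ne1 : ∀ z : H, ∀ w : Fin (n + 3) → H, (Function.update w 0 z) 1 = w 1 :=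
        fun z w => Function.update_of_ne one_ne_zero_fin _ _
      have h1ne0 : ∀ z : H, ∀ w : Fin (n + 3) → H, (Function.update w 1 z) 0 = w 0 :=
        fun z w => Function.update_of_ne (Ne.symm one_ne_zero_fin) _ _
      have hj0 : ∀ (j : Fin (n + 1)) (z : H) (w : Fin (n + 3) → H),
          (Function.update w j.succ.succ z) 0 = w 0 :=
        fun j z w => Function.update_of_ne (Ne.symm (Fin.succ_ne_zero _)) _ _
      have hj1 : ∀ (j : Fin (n + 1)) (z : H) (w : Fin (n + 3) → H),
          (Function.update w j.succ.succ z) 1 = w 1 := by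
        intro j z w
        refine Function.update_of_ne ?_ _ _
        intro hh
        rw [← Fin.succ_zero_eq_one] at hh
        exact Fin.succ_ne_zero j (Fin.succ_injective _ hh).symm
      constructor
      · intro v i x y
        refine Fin.cases ?_ (fun i1 => ?_) i
        · simp only [Function.update_self, h0ne1, hv0]
          rw [map_add, add_mul, add_mul]
          exact hML.1 _ _ _
        · refine Fin.cases ?_ (fun j => ?_) i1
          · rw [Fin.succ_zero_eq_one]
            simp only [Function.update_self, h1ne0, hv1]
            rw [mul_add]
            exact hML.1 _ _ _
          · simp only [hvj, hj0, hj1]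
            rw [hfnadd]
            exact hML.2.2.1 _ _ _ _ _
      · intro v i c x
        rw [smul_eq_mul]
        refine Fin.cases ?_ (fun i1 => ?_) i
        · simp only [Function.update_self, h0ne1, hv0]
          rw [map_smul, smul_mul_assoc, smul_mul_assoc]
          exact hML.2.1 _ _ _
        · refine Fin.cases ?_ (fun j => ?_) i1
          · rw [Fin.succ_zero_eq_one]
            simp only [Function.update_self, h1ne0, hv1]
            rw [mul_smul_comm]
            exact hML.2.1 _ _ _
          · simp only [hvj, hj0, hj1]
            rw [hfnsmul]
            exact hML.2.2.2 _ _ _ _ _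
    rw [sw_rho D hgrp (n + 2) _ hphi] at key
    dsimp only at key
    rw [hSinv, smul_mul_assoc, smul_mul_assoc, hρiρ, one_mul, hML.2.1] at key
    exact mul_left_cancel₀ hne key
  refine ⟨c1, ?_, ?_, ?_⟩
  · -- Conjunct 2
    intro n f hfc
    obtain ⟨⟨hML, hInv⟩, hCyc, hb⟩ := hfc
    constructor
    · intro b
      have ht := tRaw_rho D A hgrp f hML.1 hML.2.1
        (fun ω c x y => hML.2.2.1 ω c 0 x y) (fun ω c s x => hML.2.2.2 ω c 0 s x) b
      have hc := hCyc ρ b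
      rw [ht] at hc
      exact hc
    · intro b
      rw [← bRaw_rho D A hgrp f hML b]
      exact hb ρ b
  · -- Conjunct 3
    intro n g hg b
    exact bRaw_rho D A hgrp g hg.1 b
  · -- Conjunct 4
    intro n ι _ _ P p hpp hpinv f hfc
    have hML := hfc.1.1
    have hr : PsiRaw D P f ρ (fun _ => p)
        = ∑ k : Fin (2 * n + 2) → ι,
            (P.π (D.Sinv ρ)) (k (Fin.last (2 * n + 1))) (k 0) *
              f ρ (fun i => p (k i.castSucc) (k i.succ)) := by
      refine Dl_rho D ρ hgrp (M := ℂ)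
        (fun x y => ∑ k : Fin (2 * n + 2) → ι,
          (P.π (D.Sinv y)) (k (Fin.last (2 * n + 1))) (k 0) *
            f x (fun i => p (k i.castSucc) (k i.succ)))
        ?_ ?_ ?_ ?_
      · intro x y z
        simp only [hML.1, mul_add, Finset.sum_add_distrib]
      · intro s x z
        simp only [hML.2.1, smul_eq_mul, Finset.mul_sum]
        exact Finset.sum_congr rfl fun k _ => by ring
      · intro x y z
        simp only [map_add, Matrix.add_apply, add_mul, Finset.sum_add_distrib]
      · intro s x z
        simp only [map_smul, Matrix.smul_apply, smul_eq_mul, Finset.mul_sum]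
        exact Finset.sum_congr rfl fun k _ => by ring
    rw [hr, hSinv, map_smul]
    refine Finset.sum_congr rfl fun k _ => ?_
    conv_rhs => rw [Matrix.smul_apply, smul_eq_mul, mul_assoc, mul_left_comm,
      ← hML.2.1, heps]

end
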